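/- In a quantitative reachability game, the decreasing sequence of potential-outcome sets stabilizes after finitely many steps: there exists a natural number α* such that P^I_{α*}(v) = P^I_{α*+1}(v) for all vertices v ∈ V and all subsets of players I ⊆ Π. -/

import Mathlib

open Classical

noncomputable section

/-- A multiplayer turn-based quantitative game on a directed graph:
`owner` assigns each vertex to a player, `E` is the edge relation (every
vertex has a successor), and `cost i` is player `i`'s cost function on
infinite sequences of vertices (to be minimized), valued in `ℝ ∪ {±∞}`. -/
structure QGame (P V : Type) where
  owner : V → P
  E : V → V → Prop
  succ_exists : ∀ v, ∃ v', E v v'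
  cost : P → (ℕ → V) → EReal

namespace QGame

variable {P V : Type}

/-- An infinite play of the game: consecutive vertices are joined by edges. -/
def IsPlay (G : QGame P V) (ρ : ℕ → V) : Prop := ∀ n, G.E (ρ n) (ρ (n + 1))

/-- Concatenation `hρ` of a finite history `h` with an infinite play `ρ`. -/
def prepend (h : List V) (ρ : ℕ → V) : ℕ → V := fun n =>
  if hn : n < h.length then h.get ⟨n, hn⟩ else ρ (n - h.length)

/-- The prefix of length `n` of a play, as a list. -/
def playPrefix (ρ : ℕ → V) (n : ℕ) : List V := List.ofFn fun k : Fin n => ρ k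

/-- `hv` is a history of the game initialized at `v0`: here `h` is the strict
past and `v` the current vertex; the sequence `h ++ [v]` starts at `v0` and
follows edges. -/
def IsHist (G : QGame P V) (v0 : V) (h : List V) (v : V) : Prop :=
  (h ++ [v]).head? = some v0 ∧ List.Chain' G.E (h ++ [v])

/-- A (turn-based) strategy profile: given the past history and the current
vertex, choose the next vertex.  An individual strategy of player `i` is of
the same type; only its values at vertices owned by `i` matter. -/
abbrev Strat (P V : Type) := List V → V → V

/-- A profile/strategy is valid if it always follows edges. -/
def Valid (G : QGame P V) (σ : Strat P V) : Prop := ∀ h v, G.E v (σ h v)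

/-- History/current-vertex pair produced after `n` steps of `σ` from `v`. -/
def outcomeAux (σ : Strat P V) (v : V) : ℕ → List V × V
  | 0 => ([], v)
  | n + 1 =>
      let p := outcomeAux σ v n
      (p.1 ++ [p.2], σ p.1 p.2)

/-- The outcome play of profile `σ` from initial vertex `v`. -/
def outcome (σ : Strat P V) (v : V) (n : ℕ) : V := (outcomeAux σ v n).2

/-- The profile where player `i` unilaterally deviates to strategy `τ`
from the profile `σ`. -/
def devProf (G : QGame P V) (σ τ : Strat P V) (i : P) : Strat P V :=
  fun h v => if G.owner v = i then τ h v else σ h v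

/-- The set of deviation steps of `τ` from `σ` (for player `i`, from `v`):
positions `n` along the outcome of the deviated profile where the current
vertex belongs to player `i` and `τ` disagrees with `σ`. -/
def devSteps (G : QGame P V) (σ τ : Strat P V) (i : P) (v : V) : Set ℕ :=
  {n | G.owner (outcome (G.devProf σ τ i) v n) = i ∧
       σ (outcomeAux (G.devProf σ τ i) v n).1 (outcome (G.devProf σ τ i) v n) ≠
       τ (outcomeAux (G.devProf σ τ i) v n).1 (outcome (G.devProf σ τ i) v n)}

/-- `τ` is finitely deviating from `σ`. -/
def FinDev (G : QGame P V) (σ τ : Strat P V) (i : P) (v : V) : Prop :=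
  (G.devSteps σ τ i v).Finite

/-- `τ` is one-shot deviating from `σ`: its unique deviation step is at the
initial vertex. -/
def OneShotDev (G : QGame P V) (σ τ : Strat P V) (i : P) (v : V) : Prop :=
  G.devSteps σ τ i v = {0}

/-- Nash equilibrium of the profile `σ` from `v`, with respect to a cost
assignment `c` (no player has a profitable unilateral deviation). -/
def IsNEwith (G : QGame P V) (c : P → (ℕ → V) → EReal) (σ : Strat P V) (v : V) : Prop :=
  ∀ i τ, G.Valid τ →
    c i (outcome σ v) ≤ c i (outcome (G.devProf σ τ i) v)

/-- Weak Nash equilibrium: no profitable finitely deviating strategy. -/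
def IsWeakNEwith (G : QGame P V) (c : P → (ℕ → V) → EReal) (σ : Strat P V) (v : V) : Prop :=
  ∀ i τ, G.Valid τ → G.FinDev σ τ i v →
    c i (outcome σ v) ≤ c i (outcome (G.devProf σ τ i) v)

/-- Very weak Nash equilibrium: no profitable one-shot deviating strategy. -/
def IsVeryWeakNEwith (G : QGame P V) (c : P → (ℕ → V) → EReal) (σ : Strat P V) (v : V) : Prop :=
  ∀ i τ, G.Valid τ → G.OneShotDev σ τ i v →
    c i (outcome σ v) ≤ c i (outcome (G.devProf σ τ i) v)

/-- The strategy profile induced by `σ` in the subgame after history `h`. -/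
def subStrat (σ : Strat P V) (h : List V) : Strat P V := fun g v => σ (h ++ g) v

/-- The cost functions of the subgame after history `h`. -/
def subCost (G : QGame P V) (h : List V) : P → (ℕ → V) → EReal :=
  fun i ρ => G.cost i (prepend h ρ)

/-- Subgame perfect equilibrium: Nash equilibrium in every subgame. -/
def IsSPE (G : QGame P V) (v0 : V) (σ : Strat P V) : Prop :=
  ∀ h v, G.IsHist v0 h v → G.IsNEwith (G.subCost h) (subStrat σ h) v

/-- Weak subgame perfect equilibrium: weak NE in every subgame. -/
def IsWeakSPE (G : QGame P V) (v0 : V) (σ : Strat P V) : Prop :=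
  ∀ h v, G.IsHist v0 h v → G.IsWeakNEwith (G.subCost h) (subStrat σ h) v

/-- Very weak subgame perfect equilibrium: very weak NE in every subgame. -/
def IsVeryWeakSPE (G : QGame P V) (v0 : V) (σ : Strat P V) : Prop :=
  ∀ h v, G.IsHist v0 h v → G.IsVeryWeakNEwith (G.subCost h) (subStrat σ h) v

/-- One elimination step: `ρ` (a potential outcome in the subgame after `h`)
is erased if some player `i` controlling a vertex `ρ n` along `hρ` has an
alternative edge to some `v' ≠ ρ (n+1)` such that every play `ρ'` in the
current potential set after the extended history gives `i` a strictly
smaller cost than `hρ`. -/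
def Eset (G : QGame P V) (Pr : List V → V → Set (ℕ → V)) (h : List V) :
    Set (ℕ → V) :=
  {ρ | ∃ n v', G.E (ρ n) v' ∧ v' ≠ ρ (n + 1) ∧
      ∀ ρ' ∈ Pr (h ++ playPrefix ρ (n + 1)) v',
        G.cost (G.owner (ρ n)) (prepend (h ++ playPrefix ρ (n + 1)) ρ') <
          G.cost (G.owner (ρ n)) (prepend h ρ)}

/-- The transfinite sequence `P_α(hv)` of sets of potential outcomes of weak
Nash equilibria in the subgame `(G|_h, v)`: all plays at stage `0`, removal
of `E_α` at successors, intersections at limits. -/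
def Pset (G : QGame P V) (α : Ordinal) : List V → V → Set (ℕ → V) :=
  Ordinal.limitRecOn (motive := fun _ => List V → V → Set (ℕ → V)) α
    (fun _h v => {ρ | G.IsPlay ρ ∧ ρ 0 = v})
    (fun _ Pr => fun h v => Pr h v \ G.Eset Pr h)
    (fun α _ Pr => fun h v => ⋂ (β : Ordinal) (hβ : β < α), Pr β hβ h v)

/-- A sequence of plays converges to `ρ` (in the product topology on `V^ω`
with `V` discrete) iff every finite prefix of `ρ` is eventually a prefix of
the members of the sequence. -/
def Converges (ρs : ℕ → ℕ → V) (ρ : ℕ → V) : Prop :=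
  ∀ m, ∃ N, ∀ n ≥ N, ∀ k ≤ m, ρs n k = ρ k

/-- Upper semicontinuity of a cost function on plays. -/
def USCcost (G : QGame P V) (c : (ℕ → V) → EReal) : Prop :=
  ∀ (ρs : ℕ → ℕ → V) (ρ : ℕ → V), (∀ n, G.IsPlay (ρs n)) → G.IsPlay ρ →
    Converges ρs ρ →
      Filter.limsup (fun n => c (ρs n)) Filter.atTop ≤ c ρ

/-- A strategy (profile) is finite-memory if it is computed by a Moore
machine: a finite set `M` of memory states, updated while reading the
history, determines the move. -/
def FinMem (σ : Strat P V) : Prop :=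
  ∃ (M : Type) (_ : Finite M) (m0 : M) (upd : M → V → M) (act : M → V → V),
    ∀ h v, σ h v = act (h.foldl upd m0) v

/-- Quantitative reachability cost: the least index at which `ρ` visits the
target set `T`, and `+∞` if `T` is never visited. -/
def reachCost (T : Set V) (ρ : ℕ → V) : EReal :=
  if h : ∃ n, ρ n ∈ T then ((Nat.find h : ℕ) : EReal) else ⊤

/-- `G` is a quantitative reachability game with target sets `T i`. -/
def IsReachGame (G : QGame P V) (T : P → Set V) : Prop :=
  ∀ i ρ, G.cost i ρ = reachCost (T i) ρ

/-- The set of players that have not visited their target set along the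
history `h`. -/
def Iset (T : P → Set V) (h : List V) : Set P := {i | ∀ u ∈ h, u ∉ T i}

end QGame
namespace QGame

variable {P V : Type}

/-- Shift a play by `k` steps. -/
def shift (ρ : ℕ → V) (k : ℕ) : ℕ → V := fun n => ρ (n + k)

lemma shift_apply (ρ : ℕ → V) (k n : ℕ) : shift ρ k n = ρ (n + k) := rfl

lemma playPrefix_length (ρ : ℕ → V) (k : ℕ) : (playPrefix ρ k).length = k := by
  simp [playPrefix]

lemma mem_playPrefix {u : V} {ρ : ℕ → V} {k : ℕ} :
    u ∈ playPrefix ρ k ↔ ∃ i, i < k ∧ ρ i = u := by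
  unfold playPrefix
  rw [List.mem_ofFn]
  constructor
  · rintro ⟨i, rfl⟩; exact ⟨i, i.isLt, rfl⟩
  · rintro ⟨i, hi, rfl⟩; exact ⟨⟨i, hi⟩, rfl⟩

lemma playPrefix_congr {σ ρ : ℕ → V} {m : ℕ} (hag : ∀ k < m, σ k = ρ k) :
    playPrefix σ m = playPrefix ρ m := by
  unfold playPrefix
  exact congrArg List.ofFn (funext fun k => hag k k.isLt)

lemma prepend_apply_lt (h : List V) (x : ℕ → V) {n : ℕ} (hn : n < h.length) :
    prepend h x n = h.get ⟨n, hn⟩ := dif_pos hn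

lemma prepend_apply_ge (h : List V) (x : ℕ → V) {n : ℕ} (hn : h.length ≤ n) :
    prepend h x n = x (n - h.length) := dif_neg (by omega)

lemma prepend_nil (x : ℕ → V) : prepend ([] : List V) x = x := by
  funext n; simp [prepend]

lemma prepend_append_shift (h : List V) (ρ : ℕ → V) (k : ℕ) :
    prepend (h ++ playPrefix ρ k) (shift ρ k) = prepend h ρ := by
  have hlen : (h ++ playPrefix ρ k).length = h.length + k := by
    simp [playPrefix_length]
  funext n
  rcases lt_or_ge n h.length with h1 | h1
  · rw [prepend_apply_lt _ _ (show n < (h ++ playPrefix ρ k).length by omega),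
      prepend_apply_lt _ _ h1]
    simp [List.get_eq_getElem, List.getElem_append_left, h1]
  · rcases lt_or_ge n (h.length + k) with h2 | h2
    · rw [prepend_apply_lt _ _ (show n < (h ++ playPrefix ρ k).length by omega),
        prepend_apply_ge _ _ h1]
      have h3 : n - h.length < (playPrefix ρ k).length := by
        rw [playPrefix_length]; omega
      simp only [List.get_eq_getElem]
      rw [List.getElem_append_right (by omega)]
      simp [playPrefix]
    · rw [prepend_apply_ge _ _ (by omega), prepend_apply_ge _ _ h1, hlen, shift_apply]
      congr 1
      omega

lemma prepend_playPrefix_shift (ρ : ℕ → V) (k : ℕ) :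
    prepend (playPrefix ρ k) (shift ρ k) = ρ := by
  have := prepend_append_shift ([] : List V) ρ k
  rwa [List.nil_append, prepend_nil] at this

end QGame
namespace QGame

variable {P V : Type}

lemma reachCost_cases (T' : Set V) (ρ : ℕ → V) :
    (∃ k : ℕ, reachCost T' ρ = (k : EReal)) ∨ reachCost T' ρ = ⊤ := by
  unfold reachCost
  split_ifs with h
  · exact Or.inl ⟨_, rfl⟩
  · exact Or.inr rfl

lemma reachCost_ne_bot (T' : Set V) (ρ : ℕ → V) : reachCost T' ρ ≠ ⊥ := by
  rcases reachCost_cases T' ρ with ⟨k, hk⟩ | h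
  · rw [hk]; exact EReal.natCast_ne_bot k
  · rw [h]; simp

lemma reachCost_eq_top_iff {T' : Set V} {ρ : ℕ → V} :
    reachCost T' ρ = ⊤ ↔ ∀ n, ρ n ∉ T' := by
  unfold reachCost
  split_ifs with h
  · simp only [EReal.natCast_ne_top]
    exact iff_of_false (by simp) (by push_neg; exact h)
  · push_neg at h
    exact iff_of_true rfl h

lemma reachCost_congr {T' : Set V} {x y : ℕ → V} {m : ℕ}
    (hag : ∀ k < m, x k = y k) (hhit : ∃ k, k < m ∧ x k ∈ T') :
    reachCost T' x = reachCost T' y := by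
  obtain ⟨k, hkm, hkT⟩ := hhit
  have hx : ∃ n, x n ∈ T' := ⟨k, hkT⟩
  have hy : ∃ n, y n ∈ T' := ⟨k, (hag k hkm) ▸ hkT⟩
  have h1 : Nat.find hx ≤ k := Nat.find_le hkT
  have h2 : Nat.find hy ≤ Nat.find hx := by
    apply Nat.find_le
    rw [← hag _ (by omega)]
    exact Nat.find_spec hx
  have h3 : Nat.find hx ≤ Nat.find hy := by
    apply Nat.find_le
    rw [hag _ (by omega)]
    exact Nat.find_spec hy
  unfold reachCost
  rw [dif_pos hx, dif_pos hy]
  rw [le_antisymm h3 h2]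

lemma le_reachCost_iff {T' : Set V} {ρ : ℕ → V} {m : ℕ} :
    (m : EReal) ≤ reachCost T' ρ ↔ ∀ k < m, ρ k ∉ T' := by
  unfold reachCost
  split_ifs with h
  · rw [EReal.natCast_le_iff, Nat.le_find_iff]
  · push_neg at h
    exact iff_of_true le_top (fun k _ => h k)

lemma natCast_add_lt_add_iff (k : ℕ) (a b : EReal) :
    (k : EReal) + a < (k : EReal) + b ↔ a < b := by
  rw [← EReal.coe_coe_eq_natCast]
  constructor
  · intro hlt
    by_contra hc
    push_neg at hc
    exact absurd (add_le_add_right hc ((k : ℝ) : EReal)) (not_le.2 hlt)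
  · intro hlt
    exact EReal.add_lt_add_left_coe hlt _

lemma reachCost_prepend_of_forall {T' : Set V} {H : List V} (hH : ∀ u ∈ H, u ∉ T')
    (x : ℕ → V) :
    reachCost T' (prepend H x) = (H.length : EReal) + reachCost T' x := by
  have hmem : ∀ n, prepend H x n ∈ T' ↔ H.length ≤ n ∧ x (n - H.length) ∈ T' := by
    intro n
    rcases lt_or_ge n H.length with hn | hn
    · rw [prepend_apply_lt _ _ hn]
      exact iff_of_false (hH _ (List.get_mem H ⟨n, hn⟩)) (fun hcon => absurd hcon.1 (by omega))
    · rw [prepend_apply_ge _ _ hn]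
      simp [hn]
  by_cases hx : ∃ n, x n ∈ T'
  · obtain ⟨n₀, hn₀⟩ := hx
    have hp : ∃ n, prepend H x n ∈ T' := by
      refine ⟨H.length + n₀, (hmem _).2 ⟨by omega, by simpa using hn₀⟩⟩
    have hx' : ∃ n, x n ∈ T' := ⟨n₀, hn₀⟩
    unfold reachCost
    rw [dif_pos hp, dif_pos hx']
    have hfind : Nat.find hp = H.length + Nat.find hx' := by
      apply le_antisymm
      · apply Nat.find_le
        rw [hmem]
        exact ⟨by omega, by simpa using Nat.find_spec hx'⟩
      · have := (hmem (Nat.find hp)).1 (Nat.find_spec hp)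
        have h2 : Nat.find hx' ≤ Nat.find hp - H.length := Nat.find_le this.2
        omega
    rw [hfind]
    push_cast
    rfl
  · have hp : ¬ ∃ n, prepend H x n ∈ T' := by
      rintro ⟨n, hn⟩
      rw [hmem] at hn
      exact hx ⟨_, hn.2⟩
    unfold reachCost
    rw [dif_neg hp, dif_neg hx, ← EReal.coe_coe_eq_natCast, EReal.coe_add_top]

lemma reachCost_prepend_lt_iff {T' : Set V} (H : List V) (x y : ℕ → V) :
    reachCost T' (prepend H x) < reachCost T' (prepend H y) ↔
      (∀ u ∈ H, u ∉ T') ∧ reachCost T' x < reachCost T' y := by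
  by_cases hH : ∀ u ∈ H, u ∉ T'
  · rw [reachCost_prepend_of_forall hH, reachCost_prepend_of_forall hH,
      natCast_add_lt_add_iff]
    exact (and_iff_right hH).symm
  · push_neg at hH
    obtain ⟨u, huH, huT⟩ := hH
    obtain ⟨i, hiH, rfl⟩ := List.mem_iff_get.1 huH
    have heq : reachCost T' (prepend H x) = reachCost T' (prepend H y) := by
      apply reachCost_congr (m := H.length)
      · intro k hk
        rw [prepend_apply_lt _ _ hk, prepend_apply_lt _ _ hk]
      · exact ⟨i, i.isLt, by rwa [prepend_apply_lt _ _ i.isLt]⟩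
    rw [heq]
    simp only [lt_irrefl, false_iff, not_and]
    intro hc
    exact absurd (hc _ huH) (not_not.2 huT)

end QGame
namespace QGame

variable {P V : Type}

/-- The natural-number stages of the `Pset` sequence. -/
def PsetN (G : QGame P V) : ℕ → List V → V → Set (ℕ → V)
  | 0 => fun _h v => {ρ | G.IsPlay ρ ∧ ρ 0 = v}
  | n + 1 => fun h v => PsetN G n h v \ G.Eset (PsetN G n) h

lemma Pset_natCast (G : QGame P V) (n : ℕ) : G.Pset (n : Ordinal) = PsetN G n := by
  induction n with
  | zero =>
    rw [Nat.cast_zero]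
    exact Ordinal.limitRecOn_zero (motive := fun _ => List V → V → Set (ℕ → V)) _ _ _
  | succ n ih =>
    have h1 : ((n + 1 : ℕ) : Ordinal) = Order.succ (n : Ordinal) := by
      rw [Nat.cast_succ, Ordinal.add_one_eq_succ]
    rw [h1]
    unfold Pset
    rw [Ordinal.limitRecOn_succ]
    show (fun h v => G.Pset (n : Ordinal) h v \ G.Eset (G.Pset (n : Ordinal)) h) = _
    rw [ih]
    rfl

lemma PsetN_succ_subset (G : QGame P V) (n : ℕ) (h : List V) (v : V) :
    PsetN G (n + 1) h v ⊆ PsetN G n h v := Set.diff_subset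

lemma mem_Eset_iff (G : QGame P V) {T : P → Set V} (hT : G.IsReachGame T)
    (Pr : List V → V → Set (ℕ → V)) (h : List V) (ρ : ℕ → V) :
    ρ ∈ G.Eset Pr h ↔ ∃ n v', G.E (ρ n) v' ∧ v' ≠ ρ (n + 1) ∧
      ∀ ρ' ∈ Pr (h ++ playPrefix ρ (n + 1)) v',
        (∀ u ∈ h ++ playPrefix ρ (n + 1), u ∉ T (G.owner (ρ n))) ∧
          reachCost (T (G.owner (ρ n))) ρ' < reachCost (T (G.owner (ρ n))) (shift ρ (n + 1)) := by
  unfold Eset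
  simp only [Set.mem_setOf_eq]
  refine exists_congr fun n => exists_congr fun v' => and_congr_right fun _ =>
    and_congr_right fun _ => forall_congr' fun ρ' => imp_congr_right fun _ => ?_
  rw [hT, hT, ← prepend_append_shift h ρ (n + 1), reachCost_prepend_lt_iff]

lemma mem_Iset {T : P → Set V} {h : List V} {j : P} :
    j ∈ Iset T h ↔ ∀ u ∈ h, u ∉ T j := Iff.rfl

lemma Iset_append (T : P → Set V) (h₁ h₂ : List V) :
    Iset T (h₁ ++ h₂) = Iset T h₁ ∩ Iset T h₂ := by
  ext j
  simp only [Iset, Set.mem_setOf_eq, Set.mem_inter_iff, List.mem_append]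
  constructor
  · intro hj
    exact ⟨fun u hu => hj u (Or.inl hu), fun u hu => hj u (Or.inr hu)⟩
  · rintro ⟨hj1, hj2⟩ u (hu | hu)
    · exact hj1 u hu
    · exact hj2 u hu

lemma PsetN_congr (G : QGame P V) {T : P → Set V} (hT : G.IsReachGame T) (α : ℕ) :
    ∀ h₁ h₂ : List V, Iset T h₁ = Iset T h₂ → PsetN G α h₁ = PsetN G α h₂ := by
  induction α with
  | zero => intro h₁ h₂ _; rfl
  | succ α ih =>
    intro h₁ h₂ hI
    funext v
    show PsetN G α h₁ v \ G.Eset (PsetN G α) h₁ = PsetN G α h₂ v \ G.Eset (PsetN G α) h₂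
    rw [ih h₁ h₂ hI]
    congr 1
    ext ρ
    rw [mem_Eset_iff G hT, mem_Eset_iff G hT]
    refine exists_congr fun n => exists_congr fun v' => and_congr_right fun _ =>
      and_congr_right fun _ => ?_
    have hIext : Iset T (h₁ ++ playPrefix ρ (n + 1)) = Iset T (h₂ ++ playPrefix ρ (n + 1)) := by
      rw [Iset_append, Iset_append, hI]
    have hPr : PsetN G α (h₁ ++ playPrefix ρ (n + 1)) = PsetN G α (h₂ ++ playPrefix ρ (n + 1)) :=
      ih _ _ hIext
    rw [hPr]
    refine forall_congr' fun ρ' => imp_congr_right fun _ => and_congr_left fun _ => ?_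
    rw [← mem_Iset, ← mem_Iset, hIext]

end QGame
namespace QGame

variable {P V : Type}

/-- A set of plays is limit-closed if any sequence all of whose finite prefixes
are prefixes of members is itself a member. -/
def LimClosed (S : Set (ℕ → V)) : Prop :=
  ∀ ρ : ℕ → V, (∀ m : ℕ, ∃ σ ∈ S, ∀ k ≤ m, σ k = ρ k) → ρ ∈ S

lemma exists_subseq_limit [Finite V] [Nonempty V] (f : ℕ → ℕ → V) :
    ∃ (φ : ℕ → ℕ) (ρ : ℕ → V), StrictMono φ ∧
      ∀ m : ℕ, ∃ N, ∀ k ≥ N, ∀ t ≤ m, f (φ k) t = ρ t := by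
  letI : TopologicalSpace V := ⊥
  haveI : DiscreteTopology V := ⟨rfl⟩
  obtain ⟨ρ, φ, hφ, hconv⟩ := CompactSpace.tendsto_subseq (X := ℕ → V) f
  refine ⟨φ, ρ, hφ, fun m => ?_⟩
  have h1 : ∀ t, ∀ᶠ k in Filter.atTop, f (φ k) t = ρ t := by
    intro t
    have h2 := Filter.Tendsto.comp (continuous_apply t).continuousAt hconv
    rw [nhds_discrete] at h2
    exact Filter.tendsto_pure.1 h2
  have h2 : ∀ᶠ k in Filter.atTop, ∀ t ∈ Finset.range (m + 1), f (φ k) t = ρ t := by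
    rw [Filter.eventually_all_finset]
    exact fun t _ => h1 t
  obtain ⟨N, hN⟩ := Filter.eventually_atTop.1 h2
  exact ⟨N, fun k hk t ht => hN k hk t (Finset.mem_range.2 (by omega))⟩

lemma exists_reachCost_top [Finite V] {T' : Set V} {S : Set (ℕ → V)} (hS : LimClosed S)
    (hub : ∀ m : ℕ, ∃ ρ ∈ S, ∀ k < m, ρ k ∉ T') :
    ∃ ρ ∈ S, ∀ k, ρ k ∉ T' := by
  choose f hfS hf using hub
  haveI : Nonempty V := ⟨f 0 0⟩
  obtain ⟨φ, ρ, hφ, hconv⟩ := exists_subseq_limit f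
  refine ⟨ρ, hS ρ ?_, ?_⟩
  · intro m
    obtain ⟨N, hN⟩ := hconv m
    exact ⟨f (φ N), hfS _, fun k hk => hN N le_rfl k hk⟩
  · intro t htT
    obtain ⟨N, hN⟩ := hconv t
    have h1 : f (φ (max N (t + 1))) t = ρ t := hN _ (le_max_left _ _) t le_rfl
    have h2 : f (φ (max N (t + 1))) t ∉ T' := by
      apply hf
      have : max N (t + 1) ≤ φ (max N (t + 1)) := hφ.le_apply
      omega
    exact h2 (h1.symm ▸ htT)

end QGame
namespace QGame

variable {P V : Type}

lemma PsetN_closed [Finite V] (G : QGame P V) {T : P → Set V} (hT : G.IsReachGame T) (α : ℕ) :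
    ∀ (h : List V) (v : V), LimClosed (PsetN G α h v) := by
  induction α with
  | zero =>
    intro h v ρ happrox
    constructor
    · intro n
      obtain ⟨σ, hσ, hag⟩ := happrox (n + 1)
      have h0 : σ n = ρ n := hag n (by omega)
      have h1 : σ (n + 1) = ρ (n + 1) := hag (n + 1) le_rfl
      rw [← h0, ← h1]
      exact hσ.1 n
    · obtain ⟨σ, hσ, hag⟩ := happrox 0
      rw [← hag 0 le_rfl]
      exact hσ.2
  | succ α ih =>
    intro h v ρ happrox
    have happroxα : ∀ m : ℕ, ∃ σ ∈ PsetN G α h v, ∀ k ≤ m, σ k = ρ k := by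
      intro m
      obtain ⟨σ, hσ, hag⟩ := happrox m
      have hσ' : σ ∈ PsetN G α h v \ G.Eset (PsetN G α) h := hσ
      exact ⟨σ, hσ'.1, hag⟩
    have hρS : ρ ∈ PsetN G α h v := ih h v ρ happroxα
    show ρ ∈ PsetN G α h v \ G.Eset (PsetN G α) h
    refine ⟨hρS, fun hEρ => ?_⟩
    rw [mem_Eset_iff G hT] at hEρ
    obtain ⟨n, v', hEdge, hne, hcond⟩ := hEρ
    have main : ∀ m, n + 1 ≤ m → ∃ σ : ℕ → V, (∀ k ≤ m, σ k = ρ k) ∧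
        ∃ ρ' ∈ PsetN G α (h ++ playPrefix ρ (n + 1)) v',
          reachCost (T (G.owner (ρ n))) ρ' <
            reachCost (T (G.owner (ρ n))) (shift ρ (n + 1)) ∧
          reachCost (T (G.owner (ρ n))) (shift σ (n + 1)) ≤ reachCost (T (G.owner (ρ n))) ρ' := by
      intro m hm
      obtain ⟨σ, hσ, hag⟩ := happrox m
      have hσ' : σ ∈ PsetN G α h v \ G.Eset (PsetN G α) h := hσ
      have hσn : σ n = ρ n := hag n (by omega)
      have hσn1 : σ (n + 1) = ρ (n + 1) := hag (n + 1) hm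
      have hpre : playPrefix σ (n + 1) = playPrefix ρ (n + 1) :=
        playPrefix_congr (fun k hk => hag k (by omega))
      have hnotE := hσ'.2
      rw [mem_Eset_iff G hT] at hnotE
      push_neg at hnotE
      obtain ⟨ρ', hρ'S, hρ'⟩ := hnotE n v' (by rw [hσn]; exact hEdge) (by rw [hσn1]; exact hne)
      rw [hpre] at hρ'S
      rw [hσn, hpre] at hρ'
      obtain ⟨hnoHit, hlt⟩ := hcond ρ' hρ'S
      exact ⟨σ, hag, ρ', hρ'S, hlt, hρ' hnoHit⟩
    by_cases hc : ∃ t, shift ρ (n + 1) t ∈ T (G.owner (ρ n))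
    · obtain ⟨σ, hag, ρ', hρ'S, hlt, hge⟩ := main (n + 1 + Nat.find hc) (by omega)
      have heq : reachCost (T (G.owner (ρ n))) (shift ρ (n + 1)) =
          reachCost (T (G.owner (ρ n))) (shift σ (n + 1)) := by
        apply reachCost_congr (m := Nat.find hc + 1)
        · intro k hk
          show ρ (k + (n + 1)) = σ (k + (n + 1))
          exact (hag (k + (n + 1)) (by omega)).symm
        · exact ⟨Nat.find hc, by omega, Nat.find_spec hc⟩
      rw [heq] at hlt
      exact absurd (lt_of_le_of_lt hge hlt) (lt_irrefl _)
    · push_neg at hc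
      have hub : ∀ M : ℕ, ∃ ρ' ∈ PsetN G α (h ++ playPrefix ρ (n + 1)) v',
          ∀ k < M, ρ' k ∉ T (G.owner (ρ n)) := by
        intro M
        obtain ⟨σ, hag, ρ', hρ'S, hlt, hge⟩ := main (M + n + 1) (by omega)
        refine ⟨ρ', hρ'S, ?_⟩
        rw [← le_reachCost_iff]
        refine le_trans ?_ hge
        rw [le_reachCost_iff]
        intro k hk
        show σ (k + (n + 1)) ∉ T (G.owner (ρ n))
        rw [hag (k + (n + 1)) (by omega)]
        exact hc (k)
      obtain ⟨ρs, hρsS, hρs⟩ := exists_reachCost_top (ih (h ++ playPrefix ρ (n + 1)) v') hub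
      obtain ⟨_, hlt⟩ := hcond ρs hρsS
      rw [reachCost_eq_top_iff.2 hρs] at hlt
      exact not_top_lt hlt

end QGame
namespace QGame

variable {P V : Type}

/-- A representative history realizing a given set of players. -/
def pickHist (T : P → Set V) (I : Set P) : List V :=
  if hI : ∃ h : List V, Iset T h = I then hI.choose else []

/-- The `Λ`-vector: supremum of player `j`'s costs over the potential plays. -/
def lam (G : QGame P V) (T : P → Set V) (α : ℕ) (I : Set P) (v : V) (j : P) : EReal :=
  sSup (reachCost (T j) '' PsetN G α (pickHist T I) v)

lemma lam_eq (G : QGame P V) {T : P → Set V} (hT : G.IsReachGame T) (α : ℕ)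
    (H : List V) (v : V) (j : P) :
    sSup (reachCost (T j) '' PsetN G α H v) = lam G T α (Iset T H) v j := by
  unfold lam pickHist
  rw [dif_pos (⟨H, rfl⟩ : ∃ h : List V, Iset T h = Iset T H)]
  rw [PsetN_congr G hT α _ H
    (Exists.choose_spec (⟨H, rfl⟩ : ∃ h : List V, Iset T h = Iset T H))]

lemma lam_antitone (G : QGame P V) (T : P → Set V) (I : Set P) (v : V) (j : P) :
    Antitone (fun α => lam G T α I v j) := by
  apply antitone_nat_of_succ_le
  intro n
  exact sSup_le_sSup (Set.image_mono (PsetN_succ_subset G n _ v))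

lemma sSup_range_aux {A : Set EReal} (hA : ∀ x ∈ A, (∃ k : ℕ, x = (k : EReal)) ∨ x = ⊤) :
    sSup A = ⊥ ∨ sSup A = ⊤ ∨ ∃ k : ℕ, sSup A = (k : EReal) := by
  rcases Set.eq_empty_or_nonempty A with rfl | ⟨x₀, hx₀⟩
  · left; exact sSup_empty
  by_cases htop : ⊤ ∈ A
  · right; left; exact top_unique (le_sSup htop)
  have hcast : ∀ x ∈ A, ∃ k : ℕ, x = (k : EReal) := by
    intro x hx
    rcases hA x hx with hk | rfl
    · exact hk
    · exact absurd hx htop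
  by_cases hb : ∃ b : ℕ, ∀ x ∈ A, x ≤ (b : EReal)
  · right; right
    obtain ⟨b, hbA⟩ := hb
    obtain ⟨k₀, hk₀⟩ := hcast x₀ hx₀
    set s := (Finset.range (b + 1)).filter (fun k : ℕ => (k : EReal) ∈ A) with hs
    have hk₀s : k₀ ∈ s := by
      rw [hs, Finset.mem_filter, Finset.mem_range]
      refine ⟨?_, hk₀ ▸ hx₀⟩
      have := hbA x₀ hx₀
      rw [hk₀, EReal.natCast_le_iff] at this
      omega
    have hsne : s.Nonempty := ⟨k₀, hk₀s⟩
    refine ⟨s.max' hsne, le_antisymm (sSup_le fun x hx => ?_) (le_sSup ?_)⟩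
    · obtain ⟨k, rfl⟩ := hcast x hx
      have hks : k ∈ s := by
        rw [hs, Finset.mem_filter, Finset.mem_range]
        have := hbA _ hx
        rw [EReal.natCast_le_iff] at this
        exact ⟨by omega, hx⟩
      exact EReal.natCast_le_iff.2 (s.le_max' k hks)
    · exact (Finset.mem_filter.1 (s.max'_mem hsne)).2
  · right; left
    push_neg at hb
    rw [sSup_eq_top]
    intro c hc
    by_cases hcb : c = ⊥
    · refine ⟨x₀, hx₀, ?_⟩
      obtain ⟨k, rfl⟩ := hcast x₀ hx₀
      rw [hcb]
      exact bot_lt_iff_ne_bot.2 (EReal.natCast_ne_bot k)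
    · lift c to ℝ using ⟨hc.ne, hcb⟩
      obtain ⟨b, hbr⟩ := exists_nat_ge c
      obtain ⟨x, hxA, hlt⟩ := hb b
      refine ⟨x, hxA, lt_of_le_of_lt ?_ hlt⟩
      rw [← EReal.coe_coe_eq_natCast]
      exact EReal.coe_le_coe_iff.2 hbr

lemma lam_range (G : QGame P V) (T : P → Set V) (α : ℕ) (I : Set P) (v : V) (j : P) :
    lam G T α I v j = ⊥ ∨ lam G T α I v j = ⊤ ∨ ∃ k : ℕ, lam G T α I v j = (k : EReal) := by
  apply sSup_range_aux
  rintro x ⟨ρ, _, rfl⟩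
  exact reachCost_cases _ _

lemma antitone_eventually_const {q : ℕ → EReal} (hq : Antitone q)
    (hr : ∀ n, q n = ⊥ ∨ q n = ⊤ ∨ ∃ k : ℕ, q n = (k : EReal)) :
    ∃ N, ∀ n ≥ N, q n = q N := by
  by_cases hA : ∃ k : ℕ, ∃ n, q n = (k : EReal)
  · obtain ⟨n₁, hn₁⟩ := Nat.find_spec hA
    by_cases hB : ∃ n₂, n₁ ≤ n₂ ∧ q n₂ = ⊥
    · obtain ⟨n₂, _, hbot⟩ := hB
      refine ⟨n₂, fun n hn => ?_⟩
      have hh := hq hn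
      rw [hbot] at hh
      rw [hbot, le_bot_iff.1 hh]
    · refine ⟨n₁, fun n hn => ?_⟩
      rw [hn₁]
      have hle : q n ≤ ((Nat.find hA : ℕ) : EReal) := hn₁ ▸ hq hn
      rcases hr n with hbb | ht | ⟨k, hk⟩
      · exact absurd ⟨n, hn, hbb⟩ hB
      · rw [ht, top_le_iff] at hle
        exact absurd hle (EReal.natCast_ne_top _)
      · have hkk : Nat.find hA ≤ k := Nat.find_min' hA ⟨n, hk⟩
        rw [hk] at hle ⊢
        exact le_antisymm hle (EReal.natCast_le_iff.2 hkk)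
  · push_neg at hA
    by_cases hbot : ∃ n, q n = ⊥
    · obtain ⟨n₀, h₀⟩ := hbot
      refine ⟨n₀, fun n hn => ?_⟩
      have hh := hq hn
      rw [h₀] at hh
      rw [h₀, le_bot_iff.1 hh]
    · push_neg at hbot
      refine ⟨0, fun n _ => ?_⟩
      have h1 : ∀ m, q m = ⊤ := by
        intro m
        rcases hr m with hm | hm | ⟨k, hm⟩
        · exact absurd hm (hbot m)
        · exact hm
        · exact absurd hm (hA k m)
      rw [h1 n, h1 0]

lemma lam_eventually_const [Finite P] [Finite V] (G : QGame P V) (T : P → Set V) :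
    ∃ N : ℕ, ∀ n ≥ N, ∀ (I : Set P) (v : V) (j : P),
      lam G T n I v j = lam G T N I v j := by
  have hcoord : ∀ c : Set P × V × P, ∃ N, ∀ n ≥ N,
      lam G T n c.1 c.2.1 c.2.2 = lam G T N c.1 c.2.1 c.2.2 :=
    fun c => antitone_eventually_const (lam_antitone G T c.1 c.2.1 c.2.2)
      (fun n => lam_range G T n c.1 c.2.1 c.2.2)
  choose F hF using hcoord
  haveI : Fintype (Set P × V × P) := Fintype.ofFinite _
  refine ⟨Finset.univ.sup F, fun n hn I v j => ?_⟩
  have h1 : F (I, v, j) ≤ Finset.univ.sup F := Finset.le_sup (Finset.mem_univ _)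
  have h2 := hF (I, v, j) n (le_trans h1 hn)
  have h3 := hF (I, v, j) (Finset.univ.sup F) h1
  simp only at h2 h3
  rw [h2, h3]

end QGame
namespace QGame

variable {P V : Type}

lemma PsetN_step [Finite P] [Finite V] (G : QGame P V) {T : P → Set V} (hT : G.IsReachGame T)
    (α : ℕ) (hlam : ∀ (I : Set P) (v : V) (j : P), lam G T (α + 1) I v j = lam G T α I v j) :
    ∀ (h : List V) (v : V), PsetN G (α + 1) h v = PsetN G (α + 2) h v := by
  intro h v
  apply Set.Subset.antisymm ?_ (PsetN_succ_subset G (α + 1) h v)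
  intro ρ hρ
  show ρ ∈ PsetN G (α + 1) h v \ G.Eset (PsetN G (α + 1)) h
  refine ⟨hρ, fun hE => ?_⟩
  have hρ' : ρ ∈ PsetN G α h v \ G.Eset (PsetN G α) h := hρ
  obtain ⟨hρα, hρnE⟩ := hρ'
  rw [mem_Eset_iff G hT] at hE
  obtain ⟨n, v', hEdge, hne, hcond⟩ := hE
  rw [mem_Eset_iff G hT] at hρnE
  push_neg at hρnE
  obtain ⟨ρ'', hρ''S, hρ''⟩ := hρnE n v' hEdge hne
  set j := G.owner (ρ n) with hj
  set H := h ++ playPrefix ρ (n + 1) with hHdef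
  have hSup : sSup (reachCost (T j) '' PsetN G (α + 1) H v') =
      sSup (reachCost (T j) '' PsetN G α H v') := by
    rw [lam_eq G hT (α + 1) H v' j, lam_eq G hT α H v' j, hlam]
  rcases Set.eq_empty_or_nonempty (PsetN G (α + 1) H v') with hemp | ⟨ρ₀, hρ₀⟩
  · rw [hemp, Set.image_empty, sSup_empty] at hSup
    have h1 := le_sSup (Set.mem_image_of_mem (reachCost (T j)) hρ''S)
    rw [← hSup] at h1
    exact reachCost_ne_bot _ _ (le_bot_iff.1 h1)
  · obtain ⟨hnoHit, _⟩ := hcond ρ₀ hρ₀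
    have hge : reachCost (T j) (shift ρ (n + 1)) ≤ reachCost (T j) ρ'' := hρ'' hnoHit
    by_cases hct : ∃ t, shift ρ (n + 1) t ∈ T j
    · -- the comparison cost is finite
      have hc' : reachCost (T j) (shift ρ (n + 1)) = ((Nat.find hct : ℕ) : EReal) := by
        unfold reachCost
        rw [dif_pos hct]
      set t := Nat.find hct with htdef
      have hρ₀lt := (hcond ρ₀ hρ₀).2
      rw [hc'] at hρ₀lt hge
      have ht1 : 1 ≤ t := by
        rcases reachCost_cases (T j) ρ₀ with ⟨k, hk⟩ | hk
        · rw [hk, EReal.natCast_lt_iff] at hρ₀lt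
          omega
        · rw [hk] at hρ₀lt
          exact absurd hρ₀lt not_top_lt
      have hsle : sSup (reachCost (T j) '' PsetN G (α + 1) H v') ≤ ((t - 1 : ℕ) : EReal) := by
        apply sSup_le
        rintro x ⟨ρ', hρ'S, rfl⟩
        have hx := (hcond ρ' hρ'S).2
        rw [hc'] at hx
        rcases reachCost_cases (T j) ρ' with ⟨k, hk⟩ | hk
        · rw [hk, EReal.natCast_lt_iff] at hx
          rw [hk]
          exact EReal.natCast_le_iff.2 (by omega)
        · rw [hk] at hx
          exact absurd hx not_top_lt
      have hsge : ((t : ℕ) : EReal) ≤ sSup (reachCost (T j) '' PsetN G (α + 1) H v') := by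
        rw [hSup]
        exact hge.trans (le_sSup (Set.mem_image_of_mem _ hρ''S))
      have hfin := hsge.trans hsle
      rw [EReal.natCast_le_iff] at hfin
      omega
    · -- the comparison cost is infinite
      push_neg at hct
      have hctop : reachCost (T j) (shift ρ (n + 1)) = ⊤ := reachCost_eq_top_iff.2 hct
      rw [hctop] at hge
      have hsup_top : sSup (reachCost (T j) '' PsetN G (α + 1) H v') = ⊤ := by
        rw [hSup]
        exact top_unique (hge.trans (le_sSup (Set.mem_image_of_mem _ hρ''S)))
      have hub : ∀ M : ℕ, ∃ ρ' ∈ PsetN G (α + 1) H v', ∀ k < M, ρ' k ∉ T j := by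
        intro M
        have h2 : (M : EReal) < sSup (reachCost (T j) '' PsetN G (α + 1) H v') := by
          rw [hsup_top]
          exact lt_top_iff_ne_top.2 (EReal.natCast_ne_top M)
        obtain ⟨x, hx, hMx⟩ := lt_sSup_iff.1 h2
        obtain ⟨ρ', hρ'S, rfl⟩ := hx
        exact ⟨ρ', hρ'S, le_reachCost_iff.1 hMx.le⟩
      obtain ⟨ρs, hρsS, hρs⟩ := exists_reachCost_top (PsetN_closed G hT (α + 1) H v') hub
      obtain ⟨_, hlt⟩ := hcond ρs hρsS
      rw [reachCost_eq_top_iff.2 hρs, hctop] at hlt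
      exact lt_irrefl _ hlt

end QGame

open QGame in
/-- In a quantitative reachability game on a finite graph,
the decreasing sequence of potential-outcome sets stabilizes after finitely
many steps: there is a natural number `α*` with `P_{α*}(hv) = P_{α*+1}(hv)`
for every history (hence for every vertex `v` and every set `I ⊆ Π` of
players not yet having reached their targets). -/
theorem reach_Pset_finite_fixpoint {P V : Type} [Finite P] [Finite V]
    (G : QGame P V) (T : P → Set V) (hT : G.IsReachGame T) :
    ∃ αstar : ℕ, ∀ (h : List V) (v : V),
      G.Pset (αstar : Ordinal) h v = G.Pset ((αstar : Ordinal) + 1) h v := by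
  obtain ⟨N, hN⟩ := lam_eventually_const G T
  refine ⟨N + 1, fun h v => ?_⟩
  have hstep := PsetN_step G hT N (fun I v j => hN (N + 1) (by omega) I v j)
  have e2 : ((N + 1 : ℕ) : Ordinal) + 1 = ((N + 2 : ℕ) : Ordinal) := by
    push_cast
    rw [add_assoc, one_add_one_eq_two]
  rw [Pset_natCast G (N + 1), e2, Pset_natCast G (N + 2)]
  exact hstep h v
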